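/- Let p be a prime and let R be a commutative ring of characteristic p. Fix x ∈ R and an integer N ≥ 1, and set s = Σ_{n=1}^{N} x^{p^N − p^{N−n}}. Then s^p − s · x^{(p−1)·p^N} = x^{(p−1)·p^N} − x^{p^{N+1} − 1}. -/

import Mathlib

theorem stmt_15 (p : ℕ) (hp : p.Prime) (R : Type*) [CommRing R] [CharP R p]
    (x : R) (N : ℕ) (hN : 1 ≤ N)
    (s : R) (hs : s = ∑ n ∈ Finset.Icc 1 N, x ^ (p ^ N - p ^ (N - n))) :
    s ^ p - s * x ^ ((p - 1) * p ^ N) = x ^ ((p - 1) * p ^ N) - x ^ (p ^ (N + 1) - 1) := by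
  haveI : Fact p.Prime := ⟨hp⟩
  have hp1 : 1 ≤ p := hp.one_lt.le
  have hsr : s = ∑ i ∈ Finset.range N, x ^ (p ^ N - p ^ (N - 1 - i)) := by
    rw [hs, ← Finset.Ico_add_one_right_eq_Icc, Finset.sum_Ico_eq_sum_range]
    apply Finset.sum_congr (by congr 1)
    intro i _
    have h : N - (1 + i) = N - 1 - i := by omega
    rw [h]
  set g : ℕ → R := fun i => x ^ (p ^ (N + 1) - p ^ (N - i)) with hg
  have h1 : s ^ p = ∑ i ∈ Finset.range N, g i := by
    rw [hsr, sum_pow_char]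
    apply Finset.sum_congr rfl
    intro i hi
    rw [Finset.mem_range] at hi
    rw [hg, ← pow_mul]
    congr 1
    have he : N - 1 - i + 1 = N - i := by omega
    rw [Nat.sub_mul, ← pow_succ, ← pow_succ, he]
  have h2 : s * x ^ ((p - 1) * p ^ N) = ∑ i ∈ Finset.range N, g (i + 1) := by
    rw [hsr, Finset.sum_mul]
    apply Finset.sum_congr rfl
    intro i hi
    rw [Finset.mem_range] at hi
    rw [hg, ← pow_add]
    congr 1
    have hE : (p - 1) * p ^ N = p ^ (N + 1) - p ^ N := by
      rw [Nat.sub_mul, one_mul, pow_succ, Nat.mul_comm]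
    have ha : p ^ (N - 1 - i) ≤ p ^ N := Nat.pow_le_pow_right hp1 (by omega)
    have hb : p ^ N ≤ p ^ (N + 1) := Nat.pow_le_pow_right hp1 (by omega)
    have he : N - (i + 1) = N - 1 - i := by omega
    rw [hE, he]
    omega
  have hsplit : ∑ i ∈ Finset.range (N + 1), g i =
      (∑ i ∈ Finset.range N, g (i + 1)) + g 0 := Finset.sum_range_succ' g N
  have hsplit2 : ∑ i ∈ Finset.range (N + 1), g i =
      (∑ i ∈ Finset.range N, g i) + g N := Finset.sum_range_succ g N
  have hg0 : g 0 = x ^ ((p - 1) * p ^ N) := by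
    rw [hg]
    congr 2
    rw [Nat.sub_mul, one_mul, pow_succ, Nat.mul_comm]
    simp
  have hgN : g N = x ^ (p ^ (N + 1) - 1) := by
    rw [hg]
    congr 2
    simp
  have key : s ^ p + g N = s * x ^ ((p - 1) * p ^ N) + g 0 := by
    rw [h1, h2, ← hsplit2, hsplit]
  rw [hg0, hgN] at key
  linear_combination key
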